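/- Let F be a characteristic-zero differential field whose field of constants C is algebraically closed, and let E ⊇ F be a no-new-constants differential field extension. For i = 1,…,n let e_i ∈ E ∖ {0} satisfy e_i′/e_i ∈ F. Then either e_1,…,e_n are algebraically independent over F, or there exists (k_1,…,k_n) ∈ ℤ^n ∖ {0} such that the power product Π_{i=1}^n e_i^{k_i} ∈ F. -/

import Mathlib

/-- A derivation on a field: an additive map satisfying the Leibniz rule. -/
structure IsDerivation {E : Type*} [Field E] (D : E → E) : Prop where
  map_add : ∀ a b : E, D (a + b) = D a + D b
  leibniz : ∀ a b : E, D (a * b) = D a * b + a * D b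

namespace IsDerivation

variable {E : Type*} [Field E] {D : E → E}

lemma map_zero' (hD : IsDerivation D) : D 0 = 0 := by
  have h := hD.map_add 0 0
  rw [add_zero] at h
  exact (left_eq_add.mp h)

lemma map_one' (hD : IsDerivation D) : D 1 = 0 := by
  have h := hD.leibniz 1 1
  rw [mul_one, one_mul, mul_one] at h
  exact (left_eq_add.mp h)

lemma map_sum' {ι : Type*} (hD : IsDerivation D) (s : Finset ι) (f : ι → E) :
    D (∑ i ∈ s, f i) = ∑ i ∈ s, D (f i) := by
  classical
  induction s using Finset.cons_induction with
  | empty => simpa using hD.map_zero'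
  | cons a s ha ih =>
      rw [Finset.sum_cons, Finset.sum_cons, hD.map_add, ih]

lemma logd_mul (hD : IsDerivation D) {x y : E} (hx : x ≠ 0) (hy : y ≠ 0) :
    D (x * y) / (x * y) = D x / x + D y / y := by
  rw [hD.leibniz]
  field_simp

lemma logd_pow (hD : IsDerivation D) {x : E} (hx : x ≠ 0) (k : ℕ) :
    D (x ^ k) / x ^ k = (k : E) * (D x / x) := by
  induction k with
  | zero => simp [hD.map_one']
  | succ k ih =>
      rw [pow_succ, hD.logd_mul (pow_ne_zero _ hx) hx, ih]
      push_cast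
      ring

lemma map_inv' (hD : IsDerivation D) {x : E} (hx : x ≠ 0) : D x⁻¹ = -(D x / x ^ 2) := by
  have h := hD.leibniz x x⁻¹
  rw [mul_inv_cancel₀ hx, hD.map_one'] at h
  have h1 : x * D x⁻¹ = -(D x * x⁻¹) := by linear_combination -h
  have h2 : D x⁻¹ = x⁻¹ * (x * D x⁻¹) := by rw [← mul_assoc, inv_mul_cancel₀ hx, one_mul]
  rw [h2, h1]
  field_simp

lemma logd_inv (hD : IsDerivation D) {x : E} (hx : x ≠ 0) :
    D x⁻¹ / x⁻¹ = -(D x / x) := by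
  rw [hD.map_inv' hx]
  field_simp

lemma logd_div (hD : IsDerivation D) {x y : E} (hx : x ≠ 0) (hy : y ≠ 0) :
    D (x / y) / (x / y) = D x / x - D y / y := by
  rw [show x / y = x * y⁻¹ from div_eq_mul_inv x y,
    hD.logd_mul hx (inv_ne_zero hy), hD.logd_inv hy]
  ring

lemma logd_prod {ι : Type*} (hD : IsDerivation D) (s : Finset ι) (f : ι → E)
    (hf : ∀ i ∈ s, f i ≠ 0) :
    D (∏ i ∈ s, f i) / ∏ i ∈ s, f i = ∑ i ∈ s, D (f i) / f i := by
  classical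
  induction s using Finset.cons_induction with
  | empty => simp [hD.map_one']
  | cons a s ha ih =>
      have hfa : f a ≠ 0 := hf a (Finset.mem_cons_self a s)
      have hfs : ∀ i ∈ s, f i ≠ 0 := fun i hi => hf i (Finset.mem_cons_of_mem hi)
      have hps : (∏ i ∈ s, f i) ≠ 0 := Finset.prod_ne_zero_iff.mpr hfs
      rw [Finset.prod_cons, Finset.sum_cons, hD.logd_mul hfa hps, ih hfs]

lemma map_eq_self_mul_logd (hD : IsDerivation D) {x : E} (hx : x ≠ 0) :
    D x = x * (D x / x) := by
  field_simp

end IsDerivation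

/-- Let `F` be a characteristic-zero differential field whose field of constants `C`
is algebraically closed, and let `E ⊇ F` be a no-new-constants differential field
extension.  If `e₁, …, eₙ ∈ E \ {0}` satisfy `eᵢ'/eᵢ ∈ F`, then either the `eᵢ` are
algebraically independent over `F`, or some nontrivial power product `Π eᵢ^{kᵢ}`
lies in `F`. -/
theorem ostrowski_exponentials
    {E : Type*} [Field E] [CharZero E]
    (D : E → E) (hD : IsDerivation D)
    (F : Subfield E) (hF : ∀ a ∈ F, D a ∈ F)
    (C : Subfield E) (hC : ∀ c : E, c ∈ C ↔ (c ∈ F ∧ D c = 0))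
    [IsAlgClosed C]
    (hNNC : ∀ a : E, D a = 0 → a ∈ F)
    {n : ℕ} (e : Fin n → E) (he0 : ∀ i, e i ≠ 0) (he : ∀ i, D (e i) / e i ∈ F) :
    AlgebraicIndependent F e ∨
      (∃ k : Fin n → ℤ, k ≠ 0 ∧ (∏ i, e i ^ k i) ∈ F) := by
  classical
  by_cases hAI : AlgebraicIndependent F e
  · exact Or.inl hAI
  right
  -- monomials and their logarithmic derivatives
  set m : (Fin n →₀ ℕ) → E := fun α => ∏ i, e i ^ α i with hm_def
  have hm0 : ∀ α, m α ≠ 0 := fun α =>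
    Finset.prod_ne_zero_iff.mpr fun i _ => pow_ne_zero _ (he0 i)
  set lam : (Fin n →₀ ℕ) → E := fun α => ∑ i, (α i : E) * (D (e i) / e i) with hlam_def
  have hmld : ∀ α, D (m α) / m α = lam α := by
    intro α
    simp only [hm_def, hlam_def]
    rw [hD.logd_prod _ _ fun i _ => pow_ne_zero _ (he0 i)]
    exact Finset.sum_congr rfl fun i _ => hD.logd_pow (he0 i) (α i)
  have hmlog : ∀ α, D (m α) = lam α * m α := fun α => by
    rw [hD.map_eq_self_mul_logd (hm0 α), hmld α, mul_comm]
  have hlamF : ∀ α, lam α ∈ F :=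
    fun α => Subfield.sum_mem F fun i _ => F.mul_mem (natCast_mem F (α i)) (he i)
  -- a nontrivial relation exists
  rw [algebraicIndependent_iff] at hAI
  push_neg at hAI
  obtain ⟨p, hp0, hpne⟩ := hAI
  set P : ℕ → Prop := fun N =>
    ∃ (s : Finset (Fin n →₀ ℕ)) (c : (Fin n →₀ ℕ) → E),
      s.card = N ∧ s.Nonempty ∧ (∀ α ∈ s, c α ∈ F) ∧ (∀ α ∈ s, c α ≠ 0) ∧
        ∑ α ∈ s, c α * m α = 0 with hP_def
  have hPex : ∃ N, P N := by
    refine ⟨p.support.card, p.support, fun α => ((MvPolynomial.coeff α p : F) : E),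
      rfl, ?_, fun α _ => SetLike.coe_mem _, ?_, ?_⟩
    · exact Finset.nonempty_iff_ne_empty.mpr
        (fun h => hpne (MvPolynomial.support_eq_empty.mp h))
    · intro α hα
      simp only [ne_eq, ZeroMemClass.coe_eq_zero]
      exact MvPolynomial.mem_support_iff.mp hα
    · rw [← hp0, MvPolynomial.aeval_def, MvPolynomial.eval₂_eq']
      exact Finset.sum_congr rfl fun dd _ => rfl
  -- minimal relation
  obtain ⟨s, c, hcard, hsne, hcF, hc0, hsum⟩ := Nat.find_spec hPex
  set N := Nat.find hPex with hN_def
  have hmin : ∀ M < N, ¬ P M := fun M hM => Nat.find_min hPex hM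
  -- the relation has at least two terms
  have hcard2 : 1 < s.card := by
    rcases Nat.lt_or_ge 1 s.card with h | h
    · exact h
    · exfalso
      have hc : s.card = 1 := le_antisymm h hsne.card_pos
      obtain ⟨α, hα⟩ := Finset.card_eq_one.mp hc
      rw [hα, Finset.sum_singleton] at hsum
      exact (mul_ne_zero (hc0 α (hα ▸ Finset.mem_singleton_self α)) (hm0 α)) hsum
  obtain ⟨α₀, hα₀⟩ := hsne
  obtain ⟨α₁, hα₁, hα₁₀⟩ := Finset.exists_mem_ne hcard2 α₀
  -- differentiate the relation
  have hDsum : ∑ α ∈ s, (D (c α) + c α * lam α) * m α = 0 := by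
    have h := congrArg D hsum
    rw [hD.map_sum', hD.map_zero'] at h
    refine Eq.trans ?_ h
    exact Finset.sum_congr rfl fun α _ => by
      rw [hD.leibniz, hmlog α]; ring
  -- combine to kill the α₀ coefficient
  set d : (Fin n →₀ ℕ) → E := fun α =>
    c α₀ * (D (c α) + c α * lam α) - (D (c α₀) + c α₀ * lam α₀) * c α with hd_def
  have hdsum : ∑ α ∈ s, d α * m α = 0 := by
    have h : ∑ α ∈ s, d α * m α
        = c α₀ * (∑ α ∈ s, (D (c α) + c α * lam α) * m α)
          - (D (c α₀) + c α₀ * lam α₀) * (∑ α ∈ s, c α * m α) := by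
      rw [Finset.mul_sum, Finset.mul_sum, ← Finset.sum_sub_distrib]
      exact Finset.sum_congr rfl fun α _ => by simp only [hd_def]; ring
    rw [h, hDsum, hsum, mul_zero, mul_zero, sub_zero]
  have hdα₀ : d α₀ = 0 := by simp only [hd_def]; ring
  -- by minimality all new coefficients vanish
  have hdzero : ∀ α ∈ s, d α = 0 := by
    by_contra hcon
    push_neg at hcon
    obtain ⟨α₂, hα₂, hdα₂⟩ := hcon
    set s' : Finset (Fin n →₀ ℕ) := s.filter (fun α => d α ≠ 0) with hs'_def
    have hs'sub : s' ⊆ s := Finset.filter_subset _ _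
    have hα₂' : α₂ ∈ s' := Finset.mem_filter.mpr ⟨hα₂, hdα₂⟩
    have hα₀n : α₀ ∉ s' := fun h => (Finset.mem_filter.mp h).2 hdα₀
    have hcard' : s'.card < N := by
      rw [← hcard]
      exact Finset.card_lt_card (Finset.ssubset_iff_of_subset hs'sub |>.mpr ⟨α₀, hα₀, hα₀n⟩)
    refine hmin s'.card hcard' ⟨s', d, rfl, ⟨α₂, hα₂'⟩, ?_, ?_, ?_⟩
    · intro α hα
      have hαs := hs'sub hα
      simp only [hd_def]
      exact F.sub_mem
        (F.mul_mem (hcF α₀ hα₀) (F.add_mem (hF _ (hcF α hαs)) (F.mul_mem (hcF α hαs) (hlamF α))))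
        (F.mul_mem (F.add_mem (hF _ (hcF α₀ hα₀)) (F.mul_mem (hcF α₀ hα₀) (hlamF α₀))) (hcF α hαs))
    · intro α hα
      exact (Finset.mem_filter.mp hα).2
    · refine Eq.trans ?_ hdsum
      exact Finset.sum_filter_of_ne fun α hα h hd0 => h (by rw [hd0, zero_mul])
  -- the quotient of the two monomial terms is a constant
  have hc₀ : c α₀ ≠ 0 := hc0 α₀ hα₀
  have hc₁ : c α₁ ≠ 0 := hc0 α₁ hα₁
  have hdα₁ : c α₀ * (D (c α₁) + c α₁ * lam α₁) - (D (c α₀) + c α₀ * lam α₀) * c α₁ = 0 :=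
    hdzero α₁ hα₁
  have hm₀ : m α₀ ≠ 0 := hm0 α₀
  have hm₁ : m α₁ ≠ 0 := hm0 α₁
  set g : E := (c α₁ * m α₁) / (c α₀ * m α₀) with hg_def
  have hb₁ : c α₁ * m α₁ ≠ 0 := mul_ne_zero hc₁ hm₁
  have hb₀ : c α₀ * m α₀ ≠ 0 := mul_ne_zero hc₀ hm₀
  have hg0 : g ≠ 0 := div_ne_zero hb₁ hb₀
  have hDg : D g = 0 := by
    have hlg : D g / g = (D (c α₁) / c α₁ + lam α₁) - (D (c α₀) / c α₀ + lam α₀) := by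
      rw [hg_def, hD.logd_div hb₁ hb₀, hD.logd_mul hc₁ hm₁, hD.logd_mul hc₀ hm₀,
        hmld α₀, hmld α₁]
    have hzero : (D (c α₁) / c α₁ + lam α₁) - (D (c α₀) / c α₀ + lam α₀) = 0 := by
      field_simp
      linear_combination hdα₁
    rw [hD.map_eq_self_mul_logd hg0, hlg, hzero, mul_zero]
  have hgF : g ∈ F := hNNC g hDg
  have hmF : m α₁ / m α₀ ∈ F := by
    have h : m α₁ / m α₀ = g * (c α₀ / c α₁) := by
      rw [hg_def]
      field_simp
    rw [h]
    exact F.mul_mem hgF (F.div_mem (hcF α₀ hα₀) (hcF α₁ hα₁))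
  -- assemble the integer vector
  refine ⟨fun i => (α₁ i : ℤ) - (α₀ i : ℤ), ?_, ?_⟩
  · intro h
    apply hα₁₀
    ext i
    have := congrFun h i
    simpa [sub_eq_zero] using this
  · have hprod : (∏ i, e i ^ ((α₁ i : ℤ) - (α₀ i : ℤ))) = m α₁ / m α₀ := by
      simp only [hm_def]
      rw [← Finset.prod_div_distrib]
      exact Finset.prod_congr rfl fun i _ => by
        rw [zpow_sub₀ (he0 i), zpow_natCast, zpow_natCast]
    rw [hprod]
    exact hmF
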